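/- For natural numbers n ≥ k, the degenerate Stirling polynomial of the second kind satisfies S_{2,λ}(n,k|x) = (n!/k!) ∑_{l=0}^k C(k,l) (-1)^{k-l} binom_λ(l+x, n), where binom_λ(y,n) = y(y-λ)(y-2λ)⋯(y-(n-1)λ)/n!. Moreover, for n < k this alternating sum vanishes: ∑_{l=0}^k C(k,l)(-1)^{k-l} binom_λ(l+x,n) = 0. -/

import Mathlib

open Finset PowerSeries

/-- The λ-binomial coefficient `binom_λ(y,n) = y(y-λ)(y-2λ)⋯(y-(n-1)λ)/n!`. -/
noncomputable def dbinom (lam y : ℝ) (n : ℕ) : ℝ :=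
  (∏ i ∈ range n, (y - i * lam)) / n.factorial

/-- `(1 + λt)^{y/λ}` as a formal power series: `∑_n binom_λ(y,n) t^n`. -/
noncomputable def degExp (lam y : ℝ) : PowerSeries ℝ :=
  PowerSeries.mk fun n => dbinom lam y n

def P (lam z : ℝ) (n : ℕ) : ℝ := ∏ i ∈ range n, (z - i * lam)

lemma P_succ (lam z : ℝ) (n : ℕ) : P lam z (n+1) = P lam z n * (z - n * lam) :=
  prod_range_succ _ _

lemma prodVan (lam x y : ℝ) : ∀ n : ℕ,
    P lam (x + y) n = ∑ j ∈ range (n + 1), (n.choose j : ℝ) * (P lam x j * P lam y (n - j))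
  | 0 => by simp [P]
  | (n + 1) => by
    rw [P_succ, prodVan lam x y n, sum_mul]
    have key : ∀ j ∈ range (n + 1),
        (n.choose j : ℝ) * (P lam x j * P lam y (n - j)) * (x + y - n * lam)
        = (n.choose j : ℝ) * (P lam x (j+1) * P lam y (n - j))
          + (n.choose j : ℝ) * (P lam x j * P lam y (n + 1 - j)) := by
      intro j hj
      have hj' : j ≤ n := Nat.lt_succ_iff.mp (mem_range.mp hj)
      have hsplit : x + y - (n : ℝ) * lam = (x - j * lam) + (y - (n - j : ℕ) * lam) := by
        rw [Nat.cast_sub hj']; ring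
      have h2 : n + 1 - j = (n - j) + 1 := by omega
      rw [hsplit, P_succ, h2, P_succ]
      ring
    rw [sum_congr rfl key, sum_add_distrib]
    have hB : ∑ j ∈ range (n+1), (n.choose j : ℝ) * (P lam x j * P lam y (n + 1 - j))
        = ∑ j ∈ range n, (n.choose (j+1) : ℝ) * (P lam x (j+1) * P lam y (n - j))
          + P lam y (n+1) := by
      rw [sum_range_succ' (fun j => (n.choose j : ℝ) * (P lam x j * P lam y (n + 1 - j))) n]
      simp [P]
    have hA : ∑ j ∈ range n, (n.choose (j+1) : ℝ) * (P lam x (j+1) * P lam y (n - j))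
        = ∑ j ∈ range (n+1), (n.choose (j+1) : ℝ) * (P lam x (j+1) * P lam y (n - j)) := by
      rw [sum_range_succ]
      simp
    have hR : ∑ j ∈ range (n + 1 + 1), ((n+1).choose j : ℝ) * (P lam x j * P lam y (n + 1 - j))
        = ∑ j ∈ range (n+1), ((n.choose j : ℝ) + (n.choose (j+1) : ℝ)) *
            (P lam x (j+1) * P lam y (n - j)) + P lam y (n+1) := by
      rw [sum_range_succ' (fun j => ((n+1).choose j : ℝ) * (P lam x j * P lam y (n + 1 - j))) (n+1)]
      simp only [Nat.choose_succ_succ, Nat.cast_add, Nat.choose_zero_right, Nat.cast_one,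
        Nat.sub_zero, one_mul]
      congr 1
      · apply sum_congr rfl
        intro j hj
        have : n + 1 - (j + 1) = n - j := by omega
        rw [this]
      · simp [P]
    rw [hR, hB, hA, ← add_assoc, ← sum_add_distrib]
    congr 1
    apply sum_congr rfl
    intro j hj
    ring

lemma dbinom_eq (lam y : ℝ) (n : ℕ) : dbinom lam y n = P lam y n / n.factorial := rfl

lemma degExp_mul (lam x y : ℝ) : degExp lam x * degExp lam y = degExp lam (x + y) := by
  ext n
  rw [coeff_mul]
  rw [Finset.Nat.sum_antidiagonal_eq_sum_range_succ_mk]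
  simp only [degExp, coeff_mk, dbinom_eq]
  rw [prodVan, sum_div]
  apply sum_congr rfl
  intro j hj
  have hj' : j ≤ n := Nat.lt_succ_iff.mp (mem_range.mp hj)
  have hfac : (n.choose j : ℝ) * j.factorial * (n - j).factorial = n.factorial := by
    exact_mod_cast congrArg Nat.cast (Nat.choose_mul_factorial_mul_factorial hj')
  have h1 : (j.factorial : ℝ) ≠ 0 := Nat.cast_ne_zero.mpr j.factorial_ne_zero
  have h2 : ((n-j).factorial : ℝ) ≠ 0 := Nat.cast_ne_zero.mpr (n-j).factorial_ne_zero
  have h3 : (n.factorial : ℝ) ≠ 0 := Nat.cast_ne_zero.mpr n.factorial_ne_zero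
  field_simp
  rw [← hfac]
  ring

lemma degExp_zero (lam : ℝ) : degExp lam 0 = 1 := by
  ext n
  simp only [degExp, coeff_mk, dbinom_eq]
  cases n with
  | zero => simp [P]
  | succ m =>
    rw [coeff_one]
    simp only [Nat.succ_ne_zero, if_false]
    have : P lam 0 (m+1) = 0 := by
      apply prod_eq_zero (mem_range.mpr (Nat.succ_pos m))
      simp
    rw [this, zero_div]

lemma degExp_pow (lam : ℝ) (l : ℕ) : degExp lam 1 ^ l = degExp lam l := by
  induction l with
  | zero => simpa using (degExp_zero lam).symm
  | succ m ih =>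
    rw [pow_succ, ih, degExp_mul]
    norm_num

lemma coeff_LHS (lam x : ℝ) (k n : ℕ) :
    PowerSeries.coeff (R := ℝ) n (degExp lam x * (degExp lam 1 - 1) ^ k) =
      ∑ l ∈ range (k + 1), (k.choose l : ℝ) * (-1) ^ (k - l) * dbinom lam (l + x) n := by
  have hexp : (degExp lam 1 - 1) ^ k =
      ∑ l ∈ range (k + 1), degExp lam 1 ^ l * (-1) ^ (k - l) * (k.choose l : PowerSeries ℝ) := by
    have := add_pow (degExp lam 1) (-1 : PowerSeries ℝ) k
    rw [← sub_eq_add_neg] at this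
    rw [this]
  rw [hexp, mul_sum, map_sum]
  apply sum_congr rfl
  intro l hl
  rw [degExp_pow]
  have : degExp lam x * (degExp lam (l : ℝ) * (-1) ^ (k - l) * (k.choose l : PowerSeries ℝ))
      = ((k.choose l : ℝ) * (-1 : ℝ) ^ (k - l)) • degExp lam ((l : ℝ) + x) := by
    rw [← degExp_mul]
    rw [PowerSeries.smul_eq_C_mul, map_mul, map_pow, map_neg, map_one, map_natCast]
    push_cast
    ring
  rw [this, map_smul]
  simp only [degExp, coeff_mk, smul_eq_mul]

/-- If `S` is the sequence of degenerate Stirling polynomials of the second kind at `x`,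
defined by `(1/k!)(1+λt)^{x/λ}((1+λt)^{1/λ}-1)^k = ∑_n S_n t^n/n!`, then for `n ≥ k`,
`S n = (n!/k!) ∑_{l=0}^k C(k,l)(-1)^{k-l} binom_λ(l+x,n)`, and for `n < k` the
alternating sum `∑_{l=0}^k C(k,l)(-1)^{k-l} binom_λ(l+x,n)` vanishes. -/
theorem stmt3 (lam x : ℝ) (hlam : lam ≠ 0) (k : ℕ) (S : ℕ → ℝ)
    (hS : degExp lam x * (degExp lam 1 - 1) ^ k =
      (k.factorial : ℝ) • PowerSeries.mk (fun n => S n / n.factorial)) :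
    ∀ n : ℕ,
      (k ≤ n → S n = (n.factorial : ℝ) / (k.factorial : ℝ) *
        ∑ l ∈ range (k + 1), (k.choose l : ℝ) * (-1) ^ (k - l) * dbinom lam (l + x) n) ∧
      (n < k →
        ∑ l ∈ range (k + 1), (k.choose l : ℝ) * (-1) ^ (k - l) * dbinom lam (l + x) n = 0) := by
  intro n
  have hco := congrArg (PowerSeries.coeff (R := ℝ) n) hS
  rw [coeff_LHS, map_smul] at hco
  simp only [coeff_mk, smul_eq_mul] at hco
  constructor
  · intro _
    have h3 : (n.factorial : ℝ) ≠ 0 := Nat.cast_ne_zero.mpr n.factorial_ne_zero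
    have h4 : (k.factorial : ℝ) ≠ 0 := Nat.cast_ne_zero.mpr k.factorial_ne_zero
    rw [hco]
    field_simp
  · intro hnk
    have hdvd : (PowerSeries.X : PowerSeries ℝ) ^ k ∣ degExp lam x * (degExp lam 1 - 1) ^ k := by
      apply Dvd.dvd.mul_left
      apply pow_dvd_pow_of_dvd
      rw [PowerSeries.X_dvd_iff]
      simp [degExp, dbinom]
    have h0 := (PowerSeries.X_pow_dvd_iff.mp hdvd) n hnk
    rw [coeff_LHS] at h0
    exact h0
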